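/- Let ρ be a strictly positive density on a finite-dimensional Hilbert space and let f be a self-adjoint operator with tr(ρf) = 0. Write f̄ = ρ^{1/4} f ρ^{1/4} and B(f) = ∫₀^∞ tr( f · ρ^{1/2}(s+ρ^{1/2})⁻¹ · f · (2s+ρ^{1/2})(s+ρ^{1/2})⁻² · ρ ) ds. Then B(f) ≥ (3/2)·tr(f̄²). -/

import Mathlib

open MeasureTheory
open scoped ComplexOrder
open Set Filter MeasureTheory

noncomputable section

/-- `ρ^p` (real power) via functional calculus. -/
def rpowM {n : ℕ} (ρ : Matrix (Fin n) (Fin n) ℂ) (p : ℝ) : Matrix (Fin n) (Fin n) ℂ :=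
  cfc (fun x : ℝ => x ^ p) ρ

/-- The second-order coefficient in the expansion of `H(1+εf)`:
`B(f) = ∫₀^∞ tr( f·ρ^{1/2}(s+ρ^{1/2})⁻¹·f·(2s+ρ^{1/2})(s+ρ^{1/2})⁻²·ρ ) ds`. -/
def Bcoef {n : ℕ} (ρ f : Matrix (Fin n) (Fin n) ℂ) : ℝ :=
  ∫ s in Set.Ioi (0 : ℝ),
    ((f * (rpowM ρ (1/2) * ((s : ℂ) • 1 + rpowM ρ (1/2))⁻¹) * f *
      (((2 * s : ℝ) : ℂ) • 1 + rpowM ρ (1/2)) *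
      (((s : ℂ) • 1 + rpowM ρ (1/2))⁻¹) ^ 2 * ρ).trace).re

lemma log_ineq {t : ℝ} (ht : 1 < t) : 2*(t-1) ≤ (t+1)*Real.log t := by
  set φ : ℝ → ℝ := fun s => (s+1)*Real.log s - 2*(s-1) with hφ
  have hd : ∀ s : ℝ, 0 < s → HasDerivAt φ (1 * Real.log s + (s+1)*s⁻¹ - 2) s := by
    intro s hs0
    have h1 : HasDerivAt (fun s : ℝ => (s+1)*Real.log s) (1 * Real.log s + (s+1)*s⁻¹) s :=
      ((hasDerivAt_id s).add_const 1).mul (Real.hasDerivAt_log (ne_of_gt hs0))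
    have h2 : HasDerivAt (fun s : ℝ => 2*(s-1)) 2 s := by
      simpa using ((hasDerivAt_id s).sub_const 1).const_mul 2
    exact h1.sub h2
  have key : MonotoneOn φ (Set.Ici 1) := by
    apply monotoneOn_of_deriv_nonneg (convex_Ici 1)
    · apply ContinuousOn.sub
      · exact (continuousOn_id.add continuousOn_const).mul
          (Real.continuousOn_log.mono (by intro x hx; simp at hx ⊢; linarith))
      · fun_prop
    · intro s hs
      rw [interior_Ici] at hs
      exact (hd s (lt_trans one_pos hs)).differentiableAt.differentiableWithinAt
    · intro s hs
      rw [interior_Ici] at hs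
      have hs0 : (0:ℝ) < s := lt_trans one_pos hs
      rw [(hd s hs0).deriv]
      have hlog : 1 - s⁻¹ ≤ Real.log s := Real.one_sub_inv_le_log_of_pos hs0
      have h2 : (s+1)*s⁻¹ = 1 + s⁻¹ := by field_simp
      rw [h2]
      linarith
  have h1 : φ 1 ≤ φ t := key (by simp) (le_of_lt ht) (le_of_lt ht)
  simp [hφ] at h1
  linarith

-- for 0 < b < a : 2(a-b) ≤ (a+b)(log a - log b)
lemma log_ineq' {a b : ℝ} (hb : 0 < b) (hab : b < a) :
    2*(a-b) ≤ (a+b)*(Real.log a - Real.log b) := by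
  have ht : 1 < a/b := (one_lt_div hb).2 hab
  have := log_ineq ht
  have hlog : Real.log (a/b) = Real.log a - Real.log b := Real.log_div (by linarith) (ne_of_gt hb)
  rw [hlog] at this
  have hb' : b ≠ 0 := ne_of_gt hb
  have h2 : 2*(a-b) = b * (2*(a/b-1)) := by field_simp
  have h3 : (a+b)*(Real.log a - Real.log b) = b * ((a/b+1)*(Real.log a - Real.log b)) := by
    field_simp
  rw [h2, h3]
  exact mul_le_mul_of_nonneg_left this hb.le


noncomputable def wfun (a b s : ℝ) : ℝ := b/(s+b) * ((2*s+a)/(s+a)^2) * a^2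

lemma wfun_nonneg {a b : ℝ} (ha : 0 < a) (hb : 0 < b) {s : ℝ} (hs : 0 < s) :
    0 ≤ wfun a b s := by
  unfold wfun; positivity

-- antiderivative in the case a ≠ b
noncomputable def Gne (a b s : ℝ) : ℝ :=
  a^2*b*((a-2*b)/(a-b)^2 * (Real.log (s+b) - Real.log (s+a)) - (a/(a-b)) * (s+a)⁻¹)

lemma Gne_hasDeriv {a b : ℝ} (ha : 0 < a) (hb : 0 < b) (hab : a ≠ b) {s : ℝ} (hs : 0 ≤ s) :
    HasDerivAt (Gne a b) (wfun a b s) s := by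
  have hsa : s + a ≠ 0 := by positivity
  have hsb : s + b ≠ 0 := by positivity
  have hab' : a - b ≠ 0 := sub_ne_zero.2 hab
  have h1 : HasDerivAt (fun s : ℝ => Real.log (s+b)) ((s+b)⁻¹) s := by
    simpa [Function.comp_def] using (Real.hasDerivAt_log hsb).comp s ((hasDerivAt_id s).add_const b)
  have h2 : HasDerivAt (fun s : ℝ => Real.log (s+a)) ((s+a)⁻¹) s := by
    simpa [Function.comp_def] using (Real.hasDerivAt_log hsa).comp s ((hasDerivAt_id s).add_const a)
  have h3 : HasDerivAt (fun s : ℝ => (s+a)⁻¹) (-1/(s+a)^2) s := by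
    simpa [Pi.inv_def] using ((hasDerivAt_id s).add_const a).inv hsa
  have h := (((h1.sub h2).const_mul ((a-2*b)/(a-b)^2)).sub
      (h3.const_mul (a/(a-b)))).const_mul (a^2*b)
  refine h.congr_deriv ?_
  unfold wfun
  field_simp
  ring

lemma tendsto_inv_shift (a : ℝ) : Tendsto (fun s : ℝ => (s+a)⁻¹) atTop (nhds 0) :=
  tendsto_inv_atTop_zero.comp (tendsto_atTop_add_const_right _ a tendsto_id)

lemma tendsto_log_diff (a b : ℝ) (ha : 0 < a) (hb : 0 < b) :
    Tendsto (fun s : ℝ => Real.log (s+b) - Real.log (s+a)) atTop (nhds 0) := by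
  have h1 : Tendsto (fun s : ℝ => 1 + (b-a)*(s+a)⁻¹) atTop (nhds 1) := by
    have := (tendsto_inv_shift a).const_mul (b-a)
    simpa using tendsto_const_nhds.add this
  have h2 : Tendsto (fun s : ℝ => Real.log (1 + (b-a)*(s+a)⁻¹)) atTop (nhds 0) := by
    have := (Real.continuousAt_log (x := 1) one_ne_zero).tendsto.comp h1
    simpa [Function.comp_def] using this
  apply h2.congr'
  filter_upwards [Ioi_mem_atTop (0:ℝ)] with s hs
  have hs : (0:ℝ) < s := hs
  have hsa : s + a ≠ 0 := by positivity
  have hsb : (0:ℝ) < s + b := by positivity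
  have : 1 + (b-a)*(s+a)⁻¹ = (s+b)/(s+a) := by field_simp; ring
  rw [this, Real.log_div (ne_of_gt hsb) hsa]

lemma Gne_tendsto {a b : ℝ} (ha : 0 < a) (hb : 0 < b) :
    Tendsto (Gne a b) atTop (nhds 0) := by
  unfold Gne
  have := ((tendsto_log_diff a b ha hb).const_mul ((a-2*b)/(a-b)^2)).sub
      ((tendsto_inv_shift a).const_mul (a/(a-b)))
  have h2 := this.const_mul (a^2*b)
  simpa using h2

lemma wfun_integral_ne {a b : ℝ} (ha : 0 < a) (hb : 0 < b) (hab : a ≠ b) :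
    IntegrableOn (wfun a b) (Ioi 0) volume ∧
    ∫ s in Ioi (0:ℝ), wfun a b s
      = a^2*b*((a-2*b)/(a-b)^2 * (Real.log a - Real.log b) + (a/(a-b)) * a⁻¹) := by
  have hderiv : ∀ s ∈ Ici (0:ℝ), HasDerivAt (Gne a b) (wfun a b s) s :=
    fun s hs => Gne_hasDeriv ha hb hab hs
  have hpos : ∀ s ∈ Ioi (0:ℝ), 0 ≤ wfun a b s := fun s hs => wfun_nonneg ha hb hs
  constructor
  · exact integrableOn_Ioi_deriv_of_nonneg' hderiv hpos (Gne_tendsto ha hb)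
  · rw [integral_Ioi_of_hasDerivAt_of_nonneg' hderiv hpos (Gne_tendsto ha hb)]
    unfold Gne
    rw [zero_sub]
    have : Real.log (0+b) - Real.log (0+a) = -(Real.log a - Real.log b) := by
      rw [zero_add, zero_add]; ring
    rw [this, zero_add]
    ring

-- the case a = b
noncomputable def Geq (a s : ℝ) : ℝ := a^3*(-2*(s+a)⁻¹ + a/2 * ((s+a)^2)⁻¹)

lemma wfun_integral_eq {a : ℝ} (ha : 0 < a) :
    IntegrableOn (wfun a a) (Ioi 0) volume ∧
    ∫ s in Ioi (0:ℝ), wfun a a s = 3/2*a^2 := by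
  have hderiv : ∀ s ∈ Ici (0:ℝ), HasDerivAt (Geq a) (wfun a a s) s := by
    intro s hs
    have hs : (0:ℝ) ≤ s := hs
    have hsa : s + a ≠ 0 := by positivity
    have h3 : HasDerivAt (fun s : ℝ => (s+a)⁻¹) (-1/(s+a)^2) s := by
      simpa [Pi.inv_def] using ((hasDerivAt_id s).add_const a).inv hsa
    have h4 : HasDerivAt (fun s : ℝ => ((s+a)^2)⁻¹) (-(2*(s+a))/((s+a)^2)^2) s := by
      simpa [Pi.inv_def, Pi.pow_def] using (((hasDerivAt_id s).add_const a).pow 2).inv (pow_ne_zero 2 hsa)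
    have h := ((h3.const_mul (-2 : ℝ)).add (h4.const_mul (a/2))).const_mul (a^3)
    refine h.congr_deriv ?_
    unfold wfun
    field_simp
    ring
  have hpos : ∀ s ∈ Ioi (0:ℝ), 0 ≤ wfun a a s := fun s hs => wfun_nonneg ha ha hs
  have htend : Tendsto (Geq a) atTop (nhds 0) := by
    unfold Geq
    have h1 := (tendsto_inv_shift a).const_mul (-2 : ℝ)
    have h2 : Tendsto (fun s : ℝ => ((s+a)^2)⁻¹) atTop (nhds 0) := by
      have := ((tendsto_inv_shift a).mul (tendsto_inv_shift a))
      simpa [mul_inv, sq] using this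
    have := (h1.add (h2.const_mul (a/2))).const_mul (a^3)
    simpa using this
  constructor
  · exact integrableOn_Ioi_deriv_of_nonneg' hderiv hpos htend
  · rw [integral_Ioi_of_hasDerivAt_of_nonneg' hderiv hpos htend]
    unfold Geq
    have ha' : a ≠ 0 := ne_of_gt ha
    field_simp
    ring

lemma wfun_key_lt {a b : ℝ} (hb : 0 < b) (hab : b < a) :
    3*(a*b) ≤ (∫ s in Ioi (0:ℝ), wfun a b s) + ∫ s in Ioi (0:ℝ), wfun b a s := by
  have ha : 0 < a := lt_trans hb hab
  have hne : a ≠ b := ne_of_gt hab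
  have hne' : b ≠ a := ne_of_lt hab
  rw [(wfun_integral_ne ha hb hne).2, (wfun_integral_ne hb ha hne').2]
  have hd : a - b ≠ 0 := sub_ne_zero.2 hne
  have hd2 : 0 < a - b := sub_pos.2 hab
  have hL := log_ineq' hb hab
  have hsum : a^2*b*((a-2*b)/(a-b)^2 * (Real.log a - Real.log b) + (a/(a-b)) * a⁻¹)
      + b^2*a*((b-2*a)/(b-a)^2 * (Real.log b - Real.log a) + (b/(b-a)) * b⁻¹)
      = a*b*((a+b)*(Real.log a - Real.log b)/(a-b) + 1) := by
    have ha' : a ≠ 0 := ne_of_gt ha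
    have hb' : b ≠ 0 := ne_of_gt hb
    have hd' : b - a ≠ 0 := sub_ne_zero.2 hne'
    field_simp
    ring
  rw [hsum]
  have h2 : 2 ≤ (a+b)*(Real.log a - Real.log b)/(a-b) := (le_div_iff₀ hd2).2 (by linarith)
  nlinarith [mul_pos ha hb]

lemma wfun_key {a b : ℝ} (ha : 0 < a) (hb : 0 < b) :
    3*(a*b) ≤ (∫ s in Ioi (0:ℝ), wfun a b s) + ∫ s in Ioi (0:ℝ), wfun b a s := by
  rcases lt_trichotomy a b with h | h | h
  · have := wfun_key_lt ha h
    linarith [this]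
  · subst h
    rw [(wfun_integral_eq ha).2]
    nlinarith
  · exact wfun_key_lt hb h



section conj
variable {n : ℕ} (U : Matrix (Fin n) (Fin n) ℂ)

lemma myConjMul (hU : star U * U = 1) (A B : Matrix (Fin n) (Fin n) ℂ) :
    (U * A * star U) * (U * B * star U) = U * (A * B) * star U := by
  have cancel : ∀ X : Matrix (Fin n) (Fin n) ℂ, star U * (U * X) = X := fun X => by
    rw [← mul_assoc, hU, one_mul]
  simp only [mul_assoc, cancel]

lemma myConjInv (hU : star U * U = 1) (hU' : U * star U = 1)
    (v : Fin n → ℂ) (hv : ∀ k, v k ≠ 0) :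
    (U * Matrix.diagonal v * star U)⁻¹ = U * Matrix.diagonal (fun k => (v k)⁻¹) * star U := by
  apply Matrix.inv_eq_left_inv
  rw [myConjMul U hU, Matrix.diagonal_mul_diagonal]
  have : (fun k => (v k)⁻¹ * v k) = fun _ => (1:ℂ) := funext fun k => inv_mul_cancel₀ (hv k)
  rw [this, Matrix.diagonal_one, mul_one, hU']

lemma myConjSmulOne (c : ℂ) (hU' : U * star U = 1) :
    c • (1 : Matrix (Fin n) (Fin n) ℂ) = U * Matrix.diagonal (fun _ => c) * star U := by
  have h1 : Matrix.diagonal (fun _ : Fin n => c) = c • (1 : Matrix (Fin n) (Fin n) ℂ) := by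
    ext i j
    by_cases h : i = j <;> simp [Matrix.diagonal_apply, Matrix.one_apply, h]
  rw [h1, Matrix.mul_smul, Matrix.smul_mul, mul_one, hU']

lemma myConjAdd (A B : Matrix (Fin n) (Fin n) ℂ) :
    (U * A * star U) + (U * B * star U) = U * (A + B) * star U := by
  rw [Matrix.mul_add, Matrix.add_mul]

lemma traceConjTwo (hU : star U * U = 1) (g D E : Matrix (Fin n) (Fin n) ℂ) :
    ((U*g*star U) * (U*D*star U) * (U*g*star U) * (U*E*star U)).trace
      = (g*D*g*E).trace := by
  rw [myConjMul U hU, myConjMul U hU, myConjMul U hU]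
  rw [Matrix.trace_mul_cycle, ← mul_assoc, hU, one_mul]

lemma reTraceEntry (g : Matrix (Fin n) (Fin n) ℂ) (hg : g.IsHermitian) (d e : Fin n → ℝ) :
    (g * Matrix.diagonal (fun j => (d j : ℂ)) * g * Matrix.diagonal (fun k => (e k : ℂ))).trace
      = ((∑ k, ∑ j, Complex.normSq (g k j) * (d j * e k) : ℝ) : ℂ) := by
  have h1 : g * Matrix.diagonal (fun j => (d j : ℂ)) = Matrix.of (fun k j => g k j * (d j : ℂ)) := by
    ext k j; simp [Matrix.mul_diagonal]
  have h2 : g * Matrix.diagonal (fun k => (e k : ℂ)) = Matrix.of (fun j k => g j k * (e k : ℂ)) := by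
    ext j k; simp [Matrix.mul_diagonal]
  rw [mul_assoc (g * Matrix.diagonal fun j => (d j : ℂ)) g, h1, h2]
  rw [Matrix.trace]
  push_cast
  apply Finset.sum_congr rfl
  intro k _
  rw [Matrix.diag_apply, Matrix.mul_apply]
  apply Finset.sum_congr rfl
  intro j _
  have hjk : g j k = star (g k j) := (hg.apply j k).symm
  show g k j * (d j:ℂ) * (g j k * (e k:ℂ)) = _
  calc g k j * (d j:ℂ) * (g j k * (e k:ℂ))
      = (g k j * star (g k j)) * ((d j:ℂ) * (e k:ℂ)) := by rw [hjk]; ring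
    _ = (Complex.normSq (g k j) : ℂ) * ((d j:ℂ) * (e k:ℂ)) := by
        rw [Complex.star_def, Complex.mul_conj]

end conj


lemma wfun_form (x b s : ℝ) (hx : 0 < x) (hb : 0 < b) (hs : 0 < s) :
    b * (s + b)⁻¹ * ((2*s + x ^ ((1:ℝ)/2)) * ((s + x ^ ((1:ℝ)/2))⁻¹ * (s + x ^ ((1:ℝ)/2))⁻¹) * x)
      = wfun (x ^ ((1:ℝ)/2)) b s := by
  have hy : 0 < x ^ ((1:ℝ)/2) := Real.rpow_pos_of_pos hx _
  have hx2 : x = (x ^ ((1:ℝ)/2))^(2:ℕ) := by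
    rw [← Real.rpow_natCast (x ^ ((1:ℝ)/2)) 2, ← Real.rpow_mul hx.le]; norm_num
  set y := x ^ ((1:ℝ)/2) with hydef
  rw [wfun, hx2]
  have h1 : s + b ≠ 0 := by positivity
  have h2 : s + y ≠ 0 := by positivity
  field_simp

lemma trace_eval {n : ℕ} (U g f R H : Matrix (Fin n) (Fin n) ℂ)
    (hU : star U * U = 1) (hU' : U * star U = 1) (hg : g.IsHermitian)
    (lam : Fin n → ℝ) (hlam : ∀ k, 0 < lam k)
    (hf : f = U * g * star U)
    (hR : R = U * Matrix.diagonal (fun k => ((lam k : ℝ) : ℂ)) * star U)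
    (hH : H = U * Matrix.diagonal (fun k => ((lam k ^ ((1:ℝ)/2) : ℝ) : ℂ)) * star U)
    (s : ℝ) (hs : 0 < s) :
    (f * (H * ((s:ℂ) • 1 + H)⁻¹) * f * (((2*s : ℝ):ℂ) • 1 + H) * (((s:ℂ) • 1 + H)⁻¹)^2 * R).trace
      = ((∑ k, ∑ j, Complex.normSq (g k j) *
          wfun (lam k ^ ((1:ℝ)/2)) (lam j ^ ((1:ℝ)/2)) s : ℝ) : ℂ) := by
  have ha : ∀ k, 0 < lam k ^ ((1:ℝ)/2) := fun k => Real.rpow_pos_of_pos (hlam k) _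
  set a : Fin n → ℝ := fun k => lam k ^ ((1:ℝ)/2) with hadef
  have haux : ∀ k, a k ^ (2:ℕ) = lam k := by
    intro k
    rw [hadef, ← Real.rpow_natCast (lam k ^ ((1:ℝ)/2)) 2, ← Real.rpow_mul (hlam k).le]
    norm_num
  have hsum1 : (s:ℂ) • 1 + H = U * Matrix.diagonal (fun k => ((s + a k : ℝ) : ℂ)) * star U := by
    rw [hH, myConjSmulOne U (s:ℂ) hU', myConjAdd, Matrix.diagonal_add]
    have : (fun i => (s:ℂ) + ((lam i ^ ((1:ℝ)/2) : ℝ):ℂ))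
        = fun k => ((s + a k :ℝ):ℂ) := by
      funext k; simp only [hadef]; push_cast; ring
    rw [this]
  have hinv : ((s:ℂ) • 1 + H)⁻¹
      = U * Matrix.diagonal (fun k => (((s + a k)⁻¹ : ℝ) : ℂ)) * star U := by
    rw [hsum1, myConjInv U hU hU' _ (fun k => by
      exact_mod_cast ne_of_gt (add_pos hs (ha k)))]
    congr 1
    congr 1
    funext k
    push_cast
    ring
  have hsum2 : ((2*s : ℝ):ℂ) • 1 + H
      = U * Matrix.diagonal (fun k => ((2*s + a k : ℝ) : ℂ)) * star U := by
    rw [hH, myConjSmulOne U ((2*s:ℝ):ℂ) hU', myConjAdd, Matrix.diagonal_add]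
    have : (fun i => (((2*s:ℝ)):ℂ) + ((lam i ^ ((1:ℝ)/2) : ℝ):ℂ))
        = fun k => ((2*s + a k :ℝ):ℂ) := by
      funext k; simp only [hadef]; push_cast; ring
    rw [this]
  rw [hinv, hsum2, hf, hR, hH, sq]
  simp only [myConjMul U hU]
  rw [Matrix.trace_mul_cycle, ← mul_assoc, hU, one_mul]
  have hEntry := reTraceEntry g hg (fun j => a j * (s + a j)⁻¹)
    (fun k => (2*s + a k) * ((s + a k)⁻¹ * (s + a k)⁻¹) * lam k)
  have aux : ∀ (v w : Fin n → ℂ) (X : Matrix (Fin n) (Fin n) ℂ),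
      Matrix.diagonal v * (Matrix.diagonal w * X) = Matrix.diagonal (fun k => v k * w k) * X := by
    intro v w X; rw [← mul_assoc, Matrix.diagonal_mul_diagonal]
  have goalrw : (g * ((Matrix.diagonal fun k => ((lam k ^ ((1:ℝ)/2) :ℝ):ℂ))
          * Matrix.diagonal fun k => (((s + a k)⁻¹:ℝ):ℂ)) * g *
        Matrix.diagonal fun k => ((2 * s + a k :ℝ):ℂ)) *
      ((Matrix.diagonal fun k => (((s + a k)⁻¹:ℝ):ℂ))
        * Matrix.diagonal fun k => (((s + a k)⁻¹:ℝ):ℂ)) *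
      Matrix.diagonal (fun k => ((lam k:ℝ):ℂ))
      = g * Matrix.diagonal (fun j => ((a j * (s + a j)⁻¹ : ℝ) : ℂ)) * g
        * Matrix.diagonal (fun k =>
            (((2*s + a k) * ((s + a k)⁻¹ * (s + a k)⁻¹) * lam k : ℝ) : ℂ)) := by
    simp only [mul_assoc, aux, Matrix.diagonal_mul_diagonal]
    congr 1
    congr 1
    · congr 1
      funext k
      push_cast
      ring
    · congr 1
      congr 1
      funext k
      push_cast
      ring
  rw [goalrw]
  rw [hEntry]
  norm_cast
  apply Finset.sum_congr rfl
  intro k _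
  apply Finset.sum_congr rfl
  intro j _
  congr 1
  exact wfun_form (lam k) (a j) s (hlam k) (ha j) hs
lemma trace_eval2 {n : ℕ} (U g f Q : Matrix (Fin n) (Fin n) ℂ)
    (hU : star U * U = 1) (hU' : U * star U = 1) (hg : g.IsHermitian)
    (lam : Fin n → ℝ) (hlam : ∀ k, 0 < lam k)
    (hf : f = U * g * star U)
    (hQ : Q = U * Matrix.diagonal (fun k => ((lam k ^ ((1:ℝ)/4) : ℝ) : ℂ)) * star U) :
    ((Q * f * Q) * (Q * f * Q)).trace
      = ((∑ k, ∑ j, Complex.normSq (g k j) *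
          (lam j ^ ((1:ℝ)/2) * lam k ^ ((1:ℝ)/2)) : ℝ) : ℂ) := by
  have aux : ∀ (v w : Fin n → ℂ) (X : Matrix (Fin n) (Fin n) ℂ),
      Matrix.diagonal v * (Matrix.diagonal w * X) = Matrix.diagonal (fun k => v k * w k) * X := by
    intro v w X; rw [← mul_assoc, Matrix.diagonal_mul_diagonal]
  rw [hf, hQ]
  simp only [myConjMul U hU]
  rw [Matrix.trace_mul_cycle, ← mul_assoc, hU, one_mul]
  have hq2 : ∀ k, ((lam k ^ ((1:ℝ)/4) : ℝ):ℂ) * ((lam k ^ ((1:ℝ)/4) : ℝ):ℂ)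
      = ((lam k ^ ((1:ℝ)/2) : ℝ):ℂ) := by
    intro k
    rw [← Complex.ofReal_mul, ← Real.rpow_add (hlam k)]
    norm_num
  set Dq : Matrix (Fin n) (Fin n) ℂ :=
    Matrix.diagonal (fun k => ((lam k ^ ((1:ℝ)/4) : ℝ):ℂ)) with hDq
  set Dh : Matrix (Fin n) (Fin n) ℂ :=
    Matrix.diagonal (fun k => ((lam k ^ ((1:ℝ)/2) : ℝ):ℂ)) with hDh
  have hqq : Dq * Dq = Dh := by
    rw [hDq, hDh, Matrix.diagonal_mul_diagonal,
      show (fun i => ((lam i ^ ((1:ℝ)/4) : ℝ):ℂ) * ((lam i ^ ((1:ℝ)/4) : ℝ):ℂ))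
        = fun k => ((lam k ^ ((1:ℝ)/2) : ℝ):ℂ) from funext fun k => hq2 k]
  have hmat : ((Dq * g * Dq) * (Dq * g * Dq)) = Dq * ((g * Dh * g) * Dq) := by
    calc (Dq * g * Dq) * (Dq * g * Dq) = Dq * (g * ((Dq * Dq) * (g * Dq))) := by
          simp only [mul_assoc]
      _ = Dq * (g * (Dh * (g * Dq))) := by rw [hqq]
      _ = Dq * ((g * Dh * g) * Dq) := by simp only [mul_assoc]
  rw [hmat, Matrix.trace_mul_comm]
  have hmat2 : (g * Dh * g) * Dq * Dq = g * Dh * g * Dh := by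
    rw [mul_assoc (g * Dh * g), hqq]
  rw [hmat2]
  exact reTraceEntry g hg (fun k => lam k ^ ((1:ℝ)/2)) (fun k => lam k ^ ((1:ℝ)/2))

lemma wfun_integrableOn {a b : ℝ} (ha : 0 < a) (hb : 0 < b) :
    IntegrableOn (wfun a b) (Ioi 0) volume := by
  rcases eq_or_ne a b with rfl | h
  · exact (wfun_integral_eq ha).1
  · exact (wfun_integral_ne ha hb h).1

/-- For `ρ` a strictly positive density, `f` self-adjoint with `tr(ρ f) = 0` and
`f̄ = ρ^{1/4} f ρ^{1/4}`, one has `B(f) ≥ (3/2)·tr(f̄²)`. -/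
theorem Bcoef_ge (n : ℕ) (ρ f : Matrix (Fin n) (Fin n) ℂ)
    (hρ : ρ.PosDef) (hρtr : ρ.trace = 1)
    (hf : f.IsHermitian) (hftr : (ρ * f).trace = 0) :
    Bcoef ρ f ≥ 3 / 2 *
      (((rpowM ρ (1/4) * f * rpowM ρ (1/4)) * (rpowM ρ (1/4) * f * rpowM ρ (1/4))).trace).re := by
  classical
  have hH : ρ.IsHermitian := hρ.1
  set U : Matrix (Fin n) (Fin n) ℂ := (hH.eigenvectorUnitary : Matrix (Fin n) (Fin n) ℂ) with hUdef
  have hU : star U * U = 1 := Matrix.mem_unitaryGroup_iff'.mp (hH.eigenvectorUnitary).2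
  have hU' : U * star U = 1 := Matrix.mem_unitaryGroup_iff.mp (hH.eigenvectorUnitary).2
  set lam : Fin n → ℝ := hH.eigenvalues with hlamdef
  have hlam : ∀ k, 0 < lam k := fun k => hρ.eigenvalues_pos k
  set g : Matrix (Fin n) (Fin n) ℂ := star U * f * U with hgdef
  have hfU : f = U * g * star U := by
    rw [hgdef]
    calc f = (U * star U) * f * (U * star U) := by rw [hU', one_mul, mul_one]
      _ = U * (star U * f * U) * star U := by simp only [mul_assoc]
  have hg : g.IsHermitian := by
    show g.conjTranspose = g
    rw [hgdef]
    simp only [Matrix.conjTranspose_mul, Matrix.conjTranspose_conjTranspose,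
      Matrix.star_eq_conjTranspose, hf.eq, mul_assoc]
  have hcfc : ∀ p : ℝ, rpowM ρ p
      = U * Matrix.diagonal (fun k => ((lam k ^ p : ℝ) : ℂ)) * star U := by
    intro p
    rw [rpowM, hH.cfc_eq]
    rfl
  have hρd : ρ = U * Matrix.diagonal (fun k => ((lam k : ℝ) : ℂ)) * star U := by
    conv_lhs => rw [hH.spectral_theorem]
    rfl
  set c : Fin n → Fin n → ℝ := fun k j => Complex.normSq (g k j) with hcdef
  have hcnn : ∀ k j, 0 ≤ c k j := fun k j => Complex.normSq_nonneg _
  have hcsym : ∀ k j, c k j = c j k := by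
    intro k j
    calc Complex.normSq (g k j) = Complex.normSq (star (g k j)) := (Complex.normSq_conj _).symm
      _ = Complex.normSq (g j k) := by rw [hg.apply j k]
  set A : Fin n → ℝ := fun k => lam k ^ ((1:ℝ)/2) with hAdef
  have hA : ∀ k, 0 < A k := fun k => Real.rpow_pos_of_pos (hlam k) _
  -- RHS evaluation
  have hR2 := trace_eval2 U g f (rpowM ρ (1/4)) hU hU' hg lam hlam hfU (hcfc (1/4))
  rw [hR2, Complex.ofReal_re]
  -- LHS evaluation
  have hwint : ∀ (k j : Fin n),
      Integrable (fun s => c k j * wfun (A k) (A j) s) (volume.restrict (Ioi 0)) :=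
    fun k j => (wfun_integrableOn (hA k) (hA j)).const_mul _
  have hpt : EqOn
      (fun s : ℝ => ((f * (rpowM ρ (1/2) * ((s : ℂ) • 1 + rpowM ρ (1/2))⁻¹) * f *
        (((2 * s : ℝ) : ℂ) • 1 + rpowM ρ (1/2)) *
        (((s : ℂ) • 1 + rpowM ρ (1/2))⁻¹) ^ 2 * ρ).trace).re)
      (fun s : ℝ => ∑ k, ∑ j, c k j * wfun (A k) (A j) s) (Ioi 0) := by
    intro s hs
    simp only
    rw [trace_eval U g f ρ (rpowM ρ (1/2)) hU hU' hg lam hlam hfU hρd (hcfc (1/2)) s hs,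
      Complex.ofReal_re]
  rw [Bcoef, setIntegral_congr_fun measurableSet_Ioi hpt]
  rw [integral_finset_sum _ (fun k _ => integrable_finset_sum _ (fun j _ => hwint k j))]
  have hinner : ∀ k, (∫ s in Ioi (0:ℝ), ∑ j, c k j * wfun (A k) (A j) s)
      = ∑ j, c k j * ∫ s in Ioi (0:ℝ), wfun (A k) (A j) s := by
    intro k
    rw [integral_finset_sum _ (fun j _ => hwint k j)]
    exact Finset.sum_congr rfl fun j _ => integral_const_mul _ _
  rw [Finset.sum_congr rfl fun k _ => hinner k]
  -- final inequality
  set V : Fin n → Fin n → ℝ := fun k j => ∫ s in Ioi (0:ℝ), wfun (A k) (A j) s with hVdef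
  have hswap : (∑ k, ∑ j, c k j * V k j) = ∑ k, ∑ j, c k j * V j k := by
    rw [Finset.sum_comm]
    exact Finset.sum_congr rfl fun k _ => Finset.sum_congr rfl fun j _ => by rw [hcsym j k]
  have hkey : ∀ k j, 3 * (A k * A j) ≤ V k j + V j k := fun k j => wfun_key (hA k) (hA j)
  have sum1 : ∑ k, ∑ j, c k j * (3 * (A k * A j)) ≤ ∑ k, ∑ j, c k j * (V k j + V j k) :=
    Finset.sum_le_sum fun k _ => Finset.sum_le_sum fun j _ =>
      mul_le_mul_of_nonneg_left (hkey k j) (hcnn k j)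
  have h2S : (∑ k, ∑ j, c k j * V k j) + (∑ k, ∑ j, c k j * V k j)
      = ∑ k, ∑ j, c k j * (V k j + V j k) := by
    nth_rewrite 2 [hswap]
    rw [← Finset.sum_add_distrib]
    exact Finset.sum_congr rfl fun k _ => by
      rw [← Finset.sum_add_distrib]
      exact Finset.sum_congr rfl fun j _ => by ring
  have hT : (∑ k, ∑ j, c k j * (3 * (A k * A j)))
      = 3 * ∑ k, ∑ j, c k j * (lam j ^ ((1:ℝ)/2) * lam k ^ ((1:ℝ)/2)) := by
    rw [Finset.mul_sum]
    exact Finset.sum_congr rfl fun k _ => by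
      rw [Finset.mul_sum]
      exact Finset.sum_congr rfl fun j _ => by rw [hAdef]; ring
  rw [ge_iff_le]
  linarith [sum1, h2S, hT]


end
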